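/- arXiv:2403.09389 — 3 statements merged into one kernel-verified Lean document; each statement's English description precedes it below -/
import Mathlib

section
/- Let f : ℝ^d → ℝ be differentiable with β-Lipschitz gradient and bounded below. Let 0 < η < 1/β, let (v_t) be a sequence in ℝ^d with ∑_{t=0}^∞ |v_t|² < ∞, and define the iteration x_{t+1} = x_t − η ∇f(x_t) + v_t from any x_0. Then ∑_{t=0}^∞ |∇f(x_t)|² < ∞. -/
open Filter

open RealInnerProductSpace in
lemma descent_lemma {E : Type*} [NormedAddCommGroup E] [InnerProductSpace ℝ E]
    [CompleteSpace E]
    (f : E → ℝ) (β : ℝ) (hβ : 0 ≤ β) (hf : Differentiable ℝ f)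
    (hlip : ∀ x y, ‖gradient f x - gradient f y‖ ≤ β * ‖x - y‖) (x d : E) :
    f (x + d) ≤ f x + ⟪gradient f x, d⟫ + β / 2 * ‖d‖ ^ 2 := by
  have key : ∀ y w, fderiv ℝ f y w = ⟪gradient f y, w⟫ := fun y w => by
    rw [gradient, InnerProductSpace.toDual_symm_apply]
  have hc : Continuous (gradient f) := by
    refine (LipschitzWith.of_dist_le_mul (K := β.toNNReal) fun a b => ?_).continuous
    rw [Real.coe_toNNReal β hβ, dist_eq_norm, dist_eq_norm]
    exact hlip a b
  have hderiv : ∀ t : ℝ, HasDerivAt (fun t : ℝ => f (x + t • d))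
      (⟪gradient f (x + t • d), d⟫) t := by
    intro t
    have h1 : HasDerivAt (fun t : ℝ => x + t • d) d t := by
      simpa using ((hasDerivAt_id t).smul_const d).const_add x
    have h2 := (hf (x + t • d)).hasFDerivAt.comp_hasDerivAt t h1
    rw [key] at h2
    exact h2
  have hcont : Continuous fun t : ℝ => ⟪gradient f (x + t • d), d⟫ :=
    (hc.comp (continuous_const.add (continuous_id.smul continuous_const))).inner
      continuous_const
  have hftc : f (x + d) - f x = ∫ t in (0:ℝ)..1, ⟪gradient f (x + t • d), d⟫ := by
    have := intervalIntegral.integral_eq_sub_of_hasDerivAt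
      (f := fun t : ℝ => f (x + t • d)) (a := (0:ℝ)) (b := 1)
      (fun t _ => hderiv t) (hcont.intervalIntegrable 0 1)
    simpa using this.symm
  have hmono : ∫ t in (0:ℝ)..1, ⟪gradient f (x + t • d), d⟫ ≤
      ∫ t in (0:ℝ)..1, (⟪gradient f x, d⟫ + β * t * ‖d‖ ^ 2) := by
    refine intervalIntegral.integral_mono_on zero_le_one
      (hcont.intervalIntegrable 0 1)
      ((by fun_prop : Continuous fun t : ℝ =>
        ⟪gradient f x, d⟫ + β * t * ‖d‖ ^ 2).intervalIntegrable 0 1) ?_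
    intro t ht
    have h1 : ⟪gradient f (x + t • d), d⟫ =
        ⟪gradient f x, d⟫ + ⟪gradient f (x + t • d) - gradient f x, d⟫ := by
      rw [inner_sub_left]; ring
    rw [h1]
    have h2 : ⟪gradient f (x + t • d) - gradient f x, d⟫ ≤ β * t * ‖d‖ ^ 2 := by
      calc ⟪gradient f (x + t • d) - gradient f x, d⟫
          ≤ ‖gradient f (x + t • d) - gradient f x‖ * ‖d‖ := real_inner_le_norm _ _
        _ ≤ (β * ‖x + t • d - x‖) * ‖d‖ := by
            apply mul_le_mul_of_nonneg_right (hlip _ _) (norm_nonneg _)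
        _ = β * t * ‖d‖ ^ 2 := by
            have : ‖x + t • d - x‖ = t * ‖d‖ := by
              rw [add_sub_cancel_left, norm_smul, Real.norm_eq_abs,
                abs_of_nonneg ht.1]
            rw [this]; ring
    linarith
  have hval : ∫ t in (0:ℝ)..1, (⟪gradient f x, d⟫ + β * t * ‖d‖ ^ 2) =
      ⟪gradient f x, d⟫ + β / 2 * ‖d‖ ^ 2 := by
    rw [intervalIntegral.integral_add (intervalIntegrable_const)
      ((by fun_prop : Continuous fun t : ℝ => β * t * ‖d‖ ^ 2).intervalIntegrable 0 1)]
    have : ∫ t in (0:ℝ)..1, β * t * ‖d‖ ^ 2 = β / 2 * ‖d‖ ^ 2 := by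
      have : (fun t : ℝ => β * t * ‖d‖ ^ 2) = fun t : ℝ => (β * ‖d‖ ^ 2) * t := by
        funext t; ring
      rw [this, intervalIntegral.integral_const_mul, integral_id]
      ring
    simp [this]
  linarith [hmono, hval ▸ hmono, hftc]

theorem stmt_0 {d : ℕ} (f : EuclideanSpace ℝ (Fin d) → ℝ) (β η : ℝ) (hβ : 0 < β)
    (hf : Differentiable ℝ f)
    (hlip : ∀ x y, ‖gradient f x - gradient f y‖ ≤ β * ‖x - y‖)
    (hbdd : BddBelow (Set.range f))
    (hη0 : 0 < η) (hηβ : η < 1 / β)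
    (v x : ℕ → EuclideanSpace ℝ (Fin d))
    (hv : Summable (fun t => ‖v t‖ ^ 2))
    (hx : ∀ t, x (t + 1) = x t - η • gradient f (x t) + v t) :
    Summable (fun t => ‖gradient f (x t)‖ ^ 2) := by
  have hβη : β * η < 1 := by
    rw [lt_div_iff₀ hβ] at hηβ; linarith [hηβ]
  set c : ℝ := η * (1 - β * η) with hc_def
  have hc : 0 < c := mul_pos hη0 (by linarith)
  set K : ℝ := 1 / (2 * c) + β with hK_def
  have hK : 0 ≤ K := by positivity
  set g : ℕ → EuclideanSpace ℝ (Fin d) := fun t => gradient f (x t) with hg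
  -- one-step descent inequality
  have step : ∀ t, f (x (t + 1)) ≤ f (x t) - c / 2 * ‖g t‖ ^ 2 + K * ‖v t‖ ^ 2 := by
    intro t
    set w : EuclideanSpace ℝ (Fin d) := v t - η • g t with hw
    have hx1 : x (t + 1) = x t + w := by rw [hx t, hw]; abel
    have hd := descent_lemma f β hβ.le hf hlip (x t) w
    rw [← hx1] at hd
    have hinner : inner (𝕜 := ℝ) (g t) w = inner (𝕜 := ℝ) (g t) (v t) - η * ‖g t‖ ^ 2 := by
      rw [hw, inner_sub_right, inner_smul_right, real_inner_self_eq_norm_sq]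
    have hnw : ‖w‖ ≤ ‖v t‖ + η * ‖g t‖ := by
      calc ‖w‖ ≤ ‖v t‖ + ‖η • g t‖ := norm_sub_le _ _
        _ = ‖v t‖ + η * ‖g t‖ := by
            rw [norm_smul, Real.norm_eq_abs, abs_of_pos hη0]
    have hnw2 : ‖w‖ ^ 2 ≤ 2 * ‖v t‖ ^ 2 + 2 * η ^ 2 * ‖g t‖ ^ 2 := by
      have h0 : 0 ≤ ‖w‖ := norm_nonneg _
      nlinarith [sq_nonneg (‖v t‖ - η * ‖g t‖), norm_nonneg (v t), norm_nonneg (g t)]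
    have hgv : inner (𝕜 := ℝ) (g t) (v t) ≤ c / 2 * ‖g t‖ ^ 2 + 1 / (2 * c) * ‖v t‖ ^ 2 := by
      have h1 : inner (𝕜 := ℝ) (g t) (v t) ≤ ‖g t‖ * ‖v t‖ := real_inner_le_norm _ _
      have h2 : ‖g t‖ * ‖v t‖ ≤ c / 2 * ‖g t‖ ^ 2 + 1 / (2 * c) * ‖v t‖ ^ 2 := by
        rw [← sub_nonneg]
        have heq : c / 2 * ‖g t‖ ^ 2 + 1 / (2 * c) * ‖v t‖ ^ 2 - ‖g t‖ * ‖v t‖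
            = (c * ‖g t‖ - ‖v t‖) ^ 2 / (2 * c) := by
          field_simp; ring
        rw [heq]; positivity
      linarith
    have hKβ : K - β = 1 / (2 * c) := by rw [hK_def]; ring
    nlinarith [hd, hinner, hnw2, hgv, mul_le_mul_of_nonneg_left hnw2 (by positivity : (0:ℝ) ≤ β / 2)]
  -- telescoping bound on partial sums
  obtain ⟨B, hB⟩ := hbdd
  have hBle : ∀ y, B ≤ f y := fun y => hB (Set.mem_range_self y)
  have hvle : ∀ n, ∑ t ∈ Finset.range n, ‖v t‖ ^ 2 ≤ ∑' t, ‖v t‖ ^ 2 := fun n =>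
    Summable.sum_le_tsum _ (fun t _ => by positivity) hv
  set S : ℝ := ∑' t, ‖v t‖ ^ 2 with hS
  have htel : ∀ n, f (x n) + c / 2 * ∑ t ∈ Finset.range n, ‖g t‖ ^ 2 ≤
      f (x 0) + K * ∑ t ∈ Finset.range n, ‖v t‖ ^ 2 := by
    intro n
    induction n with
    | zero => simp
    | succ n ih =>
        rw [Finset.sum_range_succ, Finset.sum_range_succ]
        have := step n
        nlinarith [this, ih]
  have hbound : ∀ n, ∑ t ∈ Finset.range n, ‖g t‖ ^ 2 ≤ (f (x 0) - B + K * S) / (c / 2) := by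
    intro n
    rw [le_div_iff₀ (by positivity), mul_comm]
    have h1 := htel n
    have h2 := hBle (x n)
    have h3 := mul_le_mul_of_nonneg_left (hvle n) hK
    clear_value c K g S
    linarith [h1, h2, h3]
  exact summable_of_sum_range_le (fun t => by positivity) hbound
end

section
/- Per-step inequality: if f is β-smooth, 0 < η < 1/β, ε > 1/(2η(1−βη)), ρ = 2ηε(1−βη) − 1, and x⁺ = x − η∇f(x) + v, then (ρ/(2ε))|∇f(x)|² ≤ f(x) − f(x⁺) + (ε/2 + β)|v|². -/
open InnerProductSpace intervalIntegral

lemma my_descent {F : Type*} [NormedAddCommGroup F] [InnerProductSpace ℝ F] [CompleteSpace F]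
    (f : F → ℝ) (β : ℝ) (hβ : 0 ≤ β) (hf : Differentiable ℝ f)
    (hlip : ∀ x y, ‖gradient f x - gradient f y‖ ≤ β * ‖x - y‖) (x y : F) :
    f y ≤ f x + (inner ℝ (gradient f x) (y - x) : ℝ) + β / 2 * ‖y - x‖ ^ 2 := by
  set u := y - x with hu
  have hcg : Continuous (gradient f) := by
    have : LipschitzWith β.toNNReal (gradient f) :=
      LipschitzWith.of_dist_le_mul fun a b => by
        simpa [dist_eq_norm, Real.coe_toNNReal β hβ] using hlip a b
    exact this.continuous
  have hline : ∀ t : ℝ, HasDerivAt (fun t : ℝ => x + t • u) u t := fun t => by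
    simpa using ((hasDerivAt_id t).smul_const u).const_add x
  have hg : ∀ t : ℝ, HasDerivAt (fun t : ℝ => f (x + t • u))
      ((inner ℝ (gradient f (x + t • u)) u : ℝ)) t := fun t => by
    have h1 := (hf (x + t • u)).hasGradientAt.hasFDerivAt
    have := h1.comp_hasDerivAt t (hline t)
    simpa [InnerProductSpace.toDual_apply_apply, Function.comp_def] using this
  have hcont : Continuous fun t : ℝ => (inner ℝ (gradient f (x + t • u)) u : ℝ) := by
    apply Continuous.inner
    · exact hcg.comp (by continuity)
    · exact continuous_const
  have hint : f y - f x = ∫ t in (0:ℝ)..1, (inner ℝ (gradient f (x + t • u)) u : ℝ) := by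
    have := intervalIntegral.integral_eq_sub_of_hasDerivAt
        (f := fun t : ℝ => f (x + t • u)) (a := (0:ℝ)) (b := 1)
        (fun t _ => hg t) (hcont.intervalIntegrable 0 1)
    rw [this]; simp [hu]
  have hbound : ∫ t in (0:ℝ)..1, (inner ℝ (gradient f (x + t • u)) u : ℝ)
      ≤ ∫ t in (0:ℝ)..1, ((inner ℝ (gradient f x) u : ℝ) + β * t * ‖u‖ ^ 2) := by
    apply intervalIntegral.integral_mono_on (by norm_num)
      (hcont.intervalIntegrable 0 1)
      ((by continuity : Continuous fun t : ℝ => (inner ℝ (gradient f x) u : ℝ) + β * t * ‖u‖ ^ 2).intervalIntegrable 0 1)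
    intro t ht
    have h1 : (inner ℝ (gradient f (x + t • u)) u : ℝ) - (inner ℝ (gradient f x) u : ℝ)
        = (inner ℝ (gradient f (x + t • u) - gradient f x) u : ℝ) := by
      rw [inner_sub_left]
    have h2 : (inner ℝ (gradient f (x + t • u) - gradient f x) u : ℝ)
        ≤ ‖gradient f (x + t • u) - gradient f x‖ * ‖u‖ := real_inner_le_norm _ _
    have h3 : ‖gradient f (x + t • u) - gradient f x‖ ≤ β * ‖t • u‖ := by
      simpa using hlip (x + t • u) x
    have ht0 : 0 ≤ t := ht.1
    have h4 : ‖t • u‖ = t * ‖u‖ := by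
      rw [norm_smul, Real.norm_eq_abs, abs_of_nonneg ht0]
    have h5 := mul_le_mul_of_nonneg_right h3 (norm_nonneg u)
    rw [h4] at h5
    nlinarith [h5]
  have hI : ∫ t in (0:ℝ)..1, ((inner ℝ (gradient f x) u : ℝ) + β * t * ‖u‖ ^ 2)
      = (inner ℝ (gradient f x) u : ℝ) + β / 2 * ‖u‖ ^ 2 := by
    rw [intervalIntegral.integral_add (intervalIntegrable_const)
      ((by continuity : Continuous fun t : ℝ => β * t * ‖u‖ ^ 2).intervalIntegrable 0 1)]
    have : ∫ t in (0:ℝ)..1, β * t * ‖u‖ ^ 2 = β * (1/2) * ‖u‖ ^ 2 := by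
      have : (fun t : ℝ => β * t * ‖u‖ ^ 2) = fun t : ℝ => (β * ‖u‖ ^ 2) * t := by
        ext t; ring
      rw [this, intervalIntegral.integral_const_mul, integral_id]
      ring
    rw [this, intervalIntegral.integral_const, sub_zero, one_smul]
    ring
  linarith [hint ▸ (hbound.trans_eq hI)]

theorem stmt_5 {d : ℕ} (f : EuclideanSpace ℝ (Fin d) → ℝ) (β η ε ρ : ℝ) (hβ : 0 < β)
    (hf : Differentiable ℝ f)
    (hlip : ∀ x y, ‖gradient f x - gradient f y‖ ≤ β * ‖x - y‖)
    (hη0 : 0 < η) (hηβ : η < 1 / β)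
    (hε : ε > 1 / (2 * η * (1 - β * η)))
    (hρ : ρ = 2 * η * ε * (1 - β * η) - 1)
    (x v xp : EuclideanSpace ℝ (Fin d))
    (hxp : xp = x - η • gradient f x + v) :
    (ρ / (2 * ε)) * ‖gradient f x‖ ^ 2 ≤ f x - f xp + (ε / 2 + β) * ‖v‖ ^ 2 := by
  have hb : 0 < 1 - β * η := by
    have : η * β < 1 := (lt_div_iff₀ hβ).mp hηβ
    nlinarith
  have he0 : 0 < ε := lt_trans (by positivity) hε
  have hdesc := my_descent f β hβ.le hf hlip x xp
  set g := gradient f x with hg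
  have hsub : xp - x = v - η • g := by rw [hxp]; abel
  set A := ‖g‖ with hA
  set B := ‖v‖ with hB
  set t : ℝ := inner ℝ g v with ht
  have hinner : (inner ℝ g (xp - x) : ℝ) = t - η * A ^ 2 := by
    rw [hsub, inner_sub_right, real_inner_smul_right, real_inner_self_eq_norm_sq]
  have hnorm : ‖xp - x‖ ^ 2 = B ^ 2 - 2 * η * t + η ^ 2 * A ^ 2 := by
    rw [hsub, norm_sub_sq_real, real_inner_smul_right, norm_smul, Real.norm_eq_abs,
      mul_pow, sq_abs, real_inner_comm, ← hA, ← hB, ← ht]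
    ring
  rw [hinner, hnorm] at hdesc
  have hCS : t ≤ A * B := real_inner_le_norm g v
  have hεmul : 1 < ε * (2 * η * (1 - β * η)) := (div_lt_iff₀ (by positivity)).mp hε
  have h5 : 0 ≤ 2 * ε * (f x + (t - η * A ^ 2) + β / 2 * (B ^ 2 - 2 * η * t + η ^ 2 * A ^ 2) - f xp) :=
    mul_nonneg (by positivity) (sub_nonneg.mpr hdesc)
  subst hρ
  rw [div_mul_eq_mul_div, div_le_iff₀ (by positivity)]
  nlinarith [h5, sq_nonneg ((1 - β * η) * A - ε * B),
    mul_le_mul_of_nonneg_left hCS (by positivity : (0:ℝ) ≤ 2 * ε * (1 - β * η)),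
    mul_nonneg (mul_nonneg (mul_nonneg he0.le hβ.le) (sq_nonneg η)) (sq_nonneg A),
    mul_nonneg (mul_nonneg (mul_nonneg (mul_nonneg hβ.le hη0.le) hb.le) (by linarith : (0:ℝ) ≤ 2 - β*η)) (sq_nonneg A),
    mul_nonneg (mul_nonneg he0.le hβ.le) (sq_nonneg B)]
end

section
/- Robbins–Monro-type reduction: if the aggregated cycle iteration has the form y_{k+1} = y_k − η_k(∇f(y_k) + e_k) with |e_k| ≤ η_k(P + Q|∇f(y_k)|) for constants P, Q ≥ 0, f is β-smooth and bounded below, η_k > 0, ∑η_k = ∞, ∑η_k² < ∞, then liminf_{k→∞} |∇f(y_k)| = 0 and moreover ∇f(y_k) → 0. -/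
open Filter

set_option maxHeartbeats 1000000

section auxsec
variable {E : Type*} [NormedAddCommGroup E] [InnerProductSpace ℝ E] [CompleteSpace E]
local notation "⟪" x ", " y "⟫" => inner (𝕜 := ℝ) x y

theorem descent_aux (f : E → ℝ) (β : ℝ) (hf : Differentiable ℝ f)
    (hlip : ∀ x y, ‖gradient f x - gradient f y‖ ≤ β * ‖x - y‖) (x v : E) :
    f (x + v) ≤ f x + ⟪gradient f x, v⟫ + β / 2 * ‖v‖ ^ 2 := by
  set ψ : ℝ → ℝ := fun t => f (x + t • v) - t * ⟪gradient f x, v⟫ - β / 2 * t ^ 2 * ‖v‖ ^ 2 with hψ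
  have hderiv : ∀ t : ℝ, HasDerivAt ψ
      (⟪gradient f (x + t • v), v⟫ - ⟪gradient f x, v⟫ - β * t * ‖v‖ ^ 2) t := by
    intro t
    have h1 : HasDerivAt (fun s : ℝ => x + s • v) v t := by
      simpa using ((hasDerivAt_id t).smul_const v).const_add x
    have h2 := (hf (x + t • v)).hasGradientAt
    rw [hasGradientAt_iff_hasFDerivAt] at h2
    have h3 : HasDerivAt (fun s : ℝ => f (x + s • v)) ⟪gradient f (x + t • v), v⟫ t := by
      have := (hf (x + t • v)).hasFDerivAt.comp_hasDerivAt t h1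
      rw [gradient, InnerProductSpace.toDual_symm_apply]; exact this
    have h4 : HasDerivAt (fun s : ℝ => s * ⟪gradient f x, v⟫) ⟪gradient f x, v⟫ t := by
      simpa using (hasDerivAt_id t).mul_const ⟪gradient f x, v⟫
    have h5 : HasDerivAt (fun s : ℝ => β / 2 * s ^ 2 * ‖v‖ ^ 2) (β * t * ‖v‖ ^ 2) t := by
      have := ((hasDerivAt_pow 2 t).const_mul (β / 2)).mul_const (‖v‖ ^ 2)
      exact this.congr_deriv (by rw [show (2:ℕ) - 1 = 1 from rfl]; push_cast; ring)
    exact (h3.sub h4).sub h5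
  have hanti : AntitoneOn ψ (Set.Icc 0 1) := by
    apply antitoneOn_of_deriv_nonpos (convex_Icc 0 1)
    · exact (Continuous.continuousOn (by
        have : Continuous ψ := by
          apply Continuous.sub
          apply Continuous.sub
          · exact hf.continuous.comp (by continuity)
          · continuity
          · continuity
        exact this))
    · intro t ht
      exact (hderiv t).differentiableAt.differentiableWithinAt
    · intro t ht
      rw [interior_Icc] at ht
      rw [(hderiv t).deriv]
      have hcs : ⟪gradient f (x + t • v) - gradient f x, v⟫ ≤ β * t * ‖v‖ ^ 2 := by
        calc ⟪gradient f (x + t • v) - gradient f x, v⟫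
            ≤ ‖gradient f (x + t • v) - gradient f x‖ * ‖v‖ := real_inner_le_norm _ _
          _ ≤ (β * ‖(x + t • v) - x‖) * ‖v‖ := by
              gcongr; exact hlip _ _
          _ = β * t * ‖v‖ ^ 2 := by
              simp [norm_smul, abs_of_pos ht.1]; ring
      rw [inner_sub_left] at hcs
      linarith
  have := hanti (Set.left_mem_Icc.2 zero_le_one) (Set.right_mem_Icc.2 zero_le_one) zero_le_one
  simp only [hψ, zero_smul, add_zero, one_smul, zero_pow, one_pow] at this
  norm_num at this
  rw [gradient, InnerProductSpace.toDual_symm_apply]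
  linarith

theorem core_seq (η a : ℕ → ℝ) (c : ℝ) (hc : 0 < c)
    (hη : ∀ k, 0 < η k)
    (hηdiv : Tendsto (fun n => ∑ k ∈ Finset.range n, η k) atTop atTop)
    (hη0 : Tendsto η atTop (nhds 0))
    (ha : ∀ k, 0 ≤ a k)
    (hsum : Summable (fun k => η k * a k ^ 2))
    (hinc : ∀ k, a (k + 1) - a k ≤ c * η k * (1 + a k)) :
    Tendsto a atTop (nhds 0) := by
  classical
  by_contra hcon
  rw [Metric.tendsto_atTop] at hcon
  push_neg at hcon
  obtain ⟨ε, hε, hfreq⟩ := hcon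
  simp only [Real.dist_eq, sub_zero] at hfreq
  have hfreq' : ∀ N, ∃ n ≥ N, ε ≤ a n := by
    intro N
    obtain ⟨n, hn, h⟩ := hfreq N
    exact ⟨n, hn, by rwa [abs_of_nonneg (ha n)] at h⟩
  set w : ℕ → ℝ := fun k => η k * a k ^ 2 with hw
  have hwnn : ∀ k, 0 ≤ w k := fun k => mul_nonneg (hη k).le (sq_nonneg _)
  set c' : ℝ := c * (1 + ε) with hc'
  have hc'pos : 0 < c' := mul_pos hc (by linarith)
  set δ : ℝ := ε ^ 3 / (16 * c') with hδ
  have hδpos : 0 < δ := by positivity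
  set L : ℝ := ∑' k, w k with hL
  have hPle : ∀ n, ∑ k ∈ Finset.range n, w k ≤ L :=
    fun n => Summable.sum_le_tsum _ (fun k _ => hwnn k) hsum
  -- pick K₁ with tail < δ
  have hPtend : Tendsto (fun n => ∑ k ∈ Finset.range n, w k) atTop (nhds L) :=
    hsum.hasSum.tendsto_sum_nat
  obtain ⟨K₁, hK₁⟩ := (Metric.tendsto_atTop.1 hPtend) δ hδpos
  have htail : ∀ p q, K₁ ≤ p → ∑ k ∈ Finset.Ico p q, w k < δ := by
    intro p q hp
    rcases le_or_gt p q with h | h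
    · rw [Finset.sum_Ico_eq_sub _ h]
      have h1 := hPle q
      have h2 := hK₁ p hp
      rw [Real.dist_eq, abs_lt] at h2
      have h3 : ∑ k ∈ Finset.range p, w k ≥ ∑ k ∈ Finset.range K₁, w k := by
        apply Finset.sum_le_sum_of_subset_of_nonneg
        · exact Finset.range_subset_range.2 hp
        · intro i _ _; exact hwnn i
      have h4 := hK₁ K₁ le_rfl
      rw [Real.dist_eq, abs_lt] at h4
      linarith
    · rw [Finset.Ico_eq_empty (by omega)]
      simpa using hδpos
  -- pick K₂ with η small
  obtain ⟨K₂, hK₂⟩ := (Metric.tendsto_atTop.1 hη0) (ε / (4 * c')) (by positivity)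
  have hηsmall : ∀ k, K₂ ≤ k → η k < ε / (4 * c') := by
    intro k hk
    have := hK₂ k hk
    rwa [Real.dist_eq, sub_zero, abs_of_pos (hη k)] at this
  set K := max K₁ K₂ with hK
  -- frequently below ε/2
  have hbelow : ∀ N, ∃ m ≥ N, a m < ε / 2 := by
    intro N
    by_contra hb
    push_neg at hb
    have hbound : ∀ n, ∑ k ∈ Finset.range n, η k
        ≤ ∑ k ∈ Finset.range N, η k + (4 / ε ^ 2) * L := by
      intro n
      rcases le_or_gt n N with h | h
      · have h1 : ∑ k ∈ Finset.range n, η k ≤ ∑ k ∈ Finset.range N, η k := by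
          apply Finset.sum_le_sum_of_subset_of_nonneg (Finset.range_subset_range.2 h)
          intro i _ _; exact (hη i).le
        have : 0 ≤ (4 / ε ^ 2) * L := by
          apply mul_nonneg (by positivity)
          exact tsum_nonneg hwnn
        linarith
      · rw [← Finset.sum_range_add_sum_Ico _ h.le]
        have h2 : ∑ k ∈ Finset.Ico N n, η k ≤ (4 / ε ^ 2) * ∑ k ∈ Finset.Ico N n, w k := by
          rw [Finset.mul_sum]
          apply Finset.sum_le_sum
          intro i hi
          rw [Finset.mem_Ico] at hi
          have hai := hb i hi.1
          have : (ε / 2) ^ 2 ≤ a i ^ 2 := by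
            apply sq_le_sq' <;> nlinarith
          have : η i * (ε / 2) ^ 2 ≤ w i := by
            apply mul_le_mul_of_nonneg_left this (hη i).le
          rw [hw]
          calc η i = (4 / ε ^ 2) * (η i * (ε / 2)^2) := by field_simp; ring
            _ ≤ (4 / ε ^ 2) * (η i * a i ^ 2) := by
                apply mul_le_mul_of_nonneg_left _ (by positivity); exact this
        have h3 : ∑ k ∈ Finset.Ico N n, w k ≤ L := by
          calc ∑ k ∈ Finset.Ico N n, w k ≤ ∑ k ∈ Finset.range n, w k := by
                apply Finset.sum_le_sum_of_subset_of_nonneg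
                · intro i hi; rw [Finset.mem_Ico] at hi; exact Finset.mem_range.2 hi.2
                · intro i _ _; exact hwnn i
            _ ≤ L := hPle n
        have : (4 / ε ^ 2) * ∑ k ∈ Finset.Ico N n, w k ≤ (4 / ε ^ 2) * L :=
          mul_le_mul_of_nonneg_left h3 (by positivity)
        linarith
    obtain ⟨n, hn⟩ := (hηdiv.eventually
      (eventually_ge_atTop (∑ k ∈ Finset.range N, η k + (4 / ε ^ 2) * L + 1))).exists
    have := hbound n
    linarith
  -- main argument
  obtain ⟨m, hmK, ham⟩ := hbelow K
  obtain ⟨n₀, hn₀, han₀⟩ := hfreq' (m + 1)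
  have hPn : ∃ j, m < j ∧ ε ≤ a j := ⟨n₀, by omega, han₀⟩
  obtain ⟨n, ⟨hmn, han⟩, hnmin'⟩ :
      ∃ n, (m < n ∧ ε ≤ a n) ∧ ∀ j < n, ¬(m < j ∧ ε ≤ a j) :=
    ⟨Nat.find hPn, Nat.find_spec hPn, fun j hj => Nat.find_min hPn hj⟩
  have hnmin : ∀ j, m < j → j < n → a j < ε := by
    intro j h1 h2
    by_contra hcc
    exact (hnmin' j h2) ⟨h1, le_of_not_gt hcc⟩
  have hPq : ∃ m', (m ≤ m' ∧ a m' < ε / 2) ∧ m' ≤ n - 1 ∧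
      ∀ k, m' < k → k ≤ n - 1 → ¬(m ≤ k ∧ a k < ε / 2) := by
    have hmn1 : m ≤ n - 1 := by omega
    have hPm : (fun j => m ≤ j ∧ a j < ε / 2) m := ⟨le_rfl, ham⟩
    exact ⟨Nat.findGreatest (fun j => m ≤ j ∧ a j < ε / 2) (n - 1),
      Nat.findGreatest_spec (P := fun j => m ≤ j ∧ a j < ε / 2) hmn1 hPm,
      Nat.findGreatest_le _,
      fun k h1 h2 => Nat.findGreatest_is_greatest (P := fun j => m ≤ j ∧ a j < ε / 2) h1 h2⟩
  obtain ⟨m', hm'spec, hm'le, hm'max⟩ := hPq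
  have hm'ge : m ≤ m' := hm'spec.1
  have hm'lt : m' < n := by omega
  have hmid : ∀ j, m' < j → j < n → ε / 2 ≤ a j := by
    intro j h1 h2
    by_contra hcc
    exact hm'max j h1 (by omega) ⟨by omega, lt_of_not_ge hcc⟩
  have hub : ∀ j, m' ≤ j → j < n → a j < ε := by
    intro j h1 h2
    rcases eq_or_lt_of_le h1 with rfl | h
    · exact lt_of_lt_of_le hm'spec.2 (by linarith)
    · exact hnmin j (by omega) h2
  have htel : a n - a m' = ∑ j ∈ Finset.Ico m' n, (a (j + 1) - a j) := by
    rw [Finset.sum_Ico_eq_sub _ hm'lt.le, Finset.sum_range_sub, Finset.sum_range_sub]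
    ring
  have hstep : ∀ j ∈ Finset.Ico m' n, a (j + 1) - a j ≤ c' * η j := by
    intro j hj
    rw [Finset.mem_Ico] at hj
    have h1 := hinc j
    have h2 := hub j hj.1 hj.2
    have h3 := hη j
    have h4 := mul_lt_mul_of_pos_left h2 (mul_pos hc h3)
    have : c * η j * (1 + a j) ≤ c' * η j := by rw [hc']; nlinarith [h4]
    linarith
  have hsum1 : a n - a m' ≤ c' * ∑ j ∈ Finset.Ico m' n, η j := by
    rw [htel, Finset.mul_sum]
    exact Finset.sum_le_sum hstep
  have hη1 : ε / (2 * c') ≤ ∑ j ∈ Finset.Ico m' n, η j := by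
    rw [div_le_iff₀ (by positivity)]
    have := hm'spec.2
    nlinarith [hsum1]
  have hsplit : ∑ j ∈ Finset.Ico m' n, η j
      = η m' + ∑ j ∈ Finset.Ico (m' + 1) n, η j :=
    Finset.sum_eq_sum_Ico_succ_bot hm'lt _
  have hηm' : η m' < ε / (4 * c') := hηsmall m' (by omega)
  have hη2 : ε / (4 * c') ≤ ∑ j ∈ Finset.Ico (m' + 1) n, η j := by
    have : ε / (2 * c') - ε / (4 * c') = ε / (4 * c') := by field_simp; ring
    nlinarith [hη1, hsplit, hηm']
  have hwge : δ ≤ ∑ j ∈ Finset.Ico (m' + 1) n, w j := by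
    have h1 : ∑ j ∈ Finset.Ico (m' + 1) n, (ε ^ 2 / 4) * η j
        ≤ ∑ j ∈ Finset.Ico (m' + 1) n, w j := by
      apply Finset.sum_le_sum
      intro j hj
      rw [Finset.mem_Ico] at hj
      have h2 := hmid j (by omega) hj.2
      have h3 := hη j
      have h5 : ε ^ 2 / 4 ≤ a j ^ 2 := by nlinarith
      show ε ^ 2 / 4 * η j ≤ η j * a j ^ 2
      nlinarith [mul_le_mul_of_nonneg_left h5 h3.le]
    rw [← Finset.mul_sum] at h1
    have hδeq : δ = ε ^ 2 / 4 * (ε / (4 * c')) := by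
      rw [hδ]; field_simp; ring
    have h4 : δ ≤ (ε ^ 2 / 4) * ∑ j ∈ Finset.Ico (m' + 1) n, η j := by
      rw [hδeq]
      exact mul_le_mul_of_nonneg_left hη2 (by positivity)
    linarith
  have hcontra := htail (m' + 1) n (by omega)
  linarith

theorem stmt_15 {d : ℕ} (f : EuclideanSpace ℝ (Fin d) → ℝ) (β P Q : ℝ)
    (hβ : 0 < β) (hP : 0 ≤ P) (hQ : 0 ≤ Q)
    (hf : Differentiable ℝ f)
    (hlip : ∀ x y, ‖gradient f x - gradient f y‖ ≤ β * ‖x - y‖)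
    (hbdd : BddBelow (Set.range f))
    (η : ℕ → ℝ) (hηpos : ∀ k, 0 < η k)
    (hηdiv : Tendsto (fun n => ∑ k ∈ Finset.range n, η k) atTop atTop)
    (hηsq : Summable (fun k => (η k) ^ 2))
    (e y : ℕ → EuclideanSpace ℝ (Fin d))
    (he : ∀ k, ‖e k‖ ≤ η k * (P + Q * ‖gradient f (y k)‖))
    (hy : ∀ k, y (k + 1) = y k - η k • (gradient f (y k) + e k)) :
    Filter.atTop.liminf (fun k => ‖gradient f (y k)‖) = 0 ∧
      Tendsto (fun k => gradient f (y k)) atTop (nhds 0) := by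
  set a : ℕ → ℝ := fun k => ‖gradient f (y k)‖ with ha_def
  have ha : ∀ k, 0 ≤ a k := fun k => norm_nonneg _
  -- η tends to 0
  have hη0 : Tendsto η atTop (nhds 0) := by
    have h1 := hηsq.tendsto_atTop_zero
    have h2 := (Real.continuous_sqrt.tendsto' 0 0 (by simp)).comp h1
    have h3 : (Real.sqrt ∘ fun k => η k ^ 2) = η := by
      funext k
      simp [Function.comp, Real.sqrt_sq (hηpos k).le]
    rwa [h3] at h2
  -- bound M on η
  obtain ⟨M, hM⟩ := hη0.bddAbove_range
  have hM' : ∀ k, η k ≤ M := fun k => hM (Set.mem_range_self k)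
  have hMpos : 0 < M := lt_of_lt_of_le (hηpos 0) (hM' 0)
  -- increment bound
  set c : ℝ := β * (1 + M * P + M * Q) + 1 with hc_def
  have hcpos : 0 < c := by positivity
  have hinc : ∀ k, a (k + 1) - a k ≤ c * η k * (1 + a k) := by
    intro k
    have h1 : a (k + 1) - a k ≤ ‖gradient f (y (k + 1)) - gradient f (y k)‖ :=
      norm_sub_norm_le _ _
    have h2 : ‖gradient f (y (k + 1)) - gradient f (y k)‖ ≤ β * ‖y (k + 1) - y k‖ :=
      hlip _ _
    have h3 : ‖y (k + 1) - y k‖ = η k * ‖gradient f (y k) + e k‖ := by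
      rw [hy k]
      rw [sub_sub_cancel_left, norm_neg, norm_smul, Real.norm_eq_abs,
        abs_of_pos (hηpos k)]
    have h4 : ‖gradient f (y k) + e k‖ ≤ a k + η k * (P + Q * a k) :=
      le_trans (norm_add_le _ _) (add_le_add le_rfl (he k))
    have h5 : η k * (P + Q * a k) ≤ M * (P + Q * a k) := by
      apply mul_le_mul_of_nonneg_right (hM' k)
      have := ha k; positivity
    have h6 : β * (η k * ‖gradient f (y k) + e k‖) ≤ c * η k * (1 + a k) := by
      have hη := (hηpos k).le
      have hak := ha k
      have h7 : ‖gradient f (y k) + e k‖ ≤ a k + M * (P + Q * a k) := by linarith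
      have h8 : a k + M * (P + Q * a k) ≤ (1 + M * P + M * Q) * (1 + a k) := by
        nlinarith [mul_nonneg (mul_nonneg hMpos.le hP) hak, mul_nonneg hMpos.le hQ]
      rw [hc_def]
      have h9 : β * (η k * ‖gradient f (y k) + e k‖)
          ≤ β * (η k * ((1 + M * P + M * Q) * (1 + a k))) := by
        apply mul_le_mul_of_nonneg_left _ hβ.le
        exact mul_le_mul_of_nonneg_left (le_trans h7 h8) hη
      nlinarith [mul_nonneg hη hak]
    calc a (k + 1) - a k ≤ β * ‖y (k + 1) - y k‖ := le_trans h1 h2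
      _ = β * (η k * ‖gradient f (y k) + e k‖) := by rw [h3]
      _ ≤ c * η k * (1 + a k) := h6
  -- descent per step
  set C : ℝ := (P + Q) + β * ((1 + M * Q) ^ 2 + M ^ 2 * P ^ 2) + 1 with hC_def
  have hCpos : 0 < C := by positivity
  have key : ∀ k, f (y (k + 1)) ≤ f (y k) - η k * a k ^ 2 + C * η k ^ 2 * (1 + a k ^ 2) := by
    intro k
    have hyk : y (k + 1) = y k + (-(η k • (gradient f (y k) + e k))) := by
      rw [hy k]; abel
    have hd := descent_aux f β hf hlip (y k) (-(η k • (gradient f (y k) + e k)))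
    rw [← hyk] at hd
    set gk := gradient f (y k)
    set ek := e k
    set t := η k with ht_def
    have htpos : 0 < t := hηpos k
    have hak : 0 ≤ a k := ha k
    have hip : ⟪gk, -(t • (gk + ek))⟫ = -(t * (a k ^ 2 + ⟪gk, ek⟫)) := by
      rw [inner_neg_right, real_inner_smul_right, inner_add_right,
        real_inner_self_eq_norm_sq]
    have hie : |(⟪gk, ek⟫ : ℝ)| ≤ a k * (t * (P + Q * a k)) := by
      calc |(⟪gk, ek⟫ : ℝ)| ≤ ‖gk‖ * ‖ek‖ := abs_real_inner_le_norm _ _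
        _ ≤ a k * (t * (P + Q * a k)) := by
            apply mul_le_mul_of_nonneg_left (he k) hak
    have hnv : ‖-(t • (gk + ek))‖ = t * ‖gk + ek‖ := by
      rw [norm_neg, norm_smul, Real.norm_eq_abs, abs_of_pos htpos]
    have hge : ‖gk + ek‖ ≤ a k + M * (P + Q * a k) := by
      have h4 : ‖gk + ek‖ ≤ a k + t * (P + Q * a k) :=
        le_trans (norm_add_le _ _) (add_le_add le_rfl (he k))
      have h5 : t * (P + Q * a k) ≤ M * (P + Q * a k) := by
        apply mul_le_mul_of_nonneg_right (hM' k); positivity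
      linarith
    have hnv2 : ‖-(t • (gk + ek))‖ ^ 2 ≤ t ^ 2 * (a k + M * (P + Q * a k)) ^ 2 := by
      rw [hnv, mul_pow]
      gcongr
    rw [hip] at hd
    have hsq : (a k + M * (P + Q * a k)) ^ 2
        ≤ (2 * (1 + M * Q) ^ 2 + 2 * M ^ 2 * P ^ 2) * (1 + a k ^ 2) := by
      nlinarith [sq_nonneg ((1 + M * Q) * a k - M * P), sq_nonneg (a k),
        mul_nonneg (mul_nonneg hMpos.le hP) hak, sq_nonneg (1 + M * Q)]
    have habs : -(t * ⟪gk, ek⟫) ≤ t * (a k * (t * (P + Q * a k))) := by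
      have := neg_abs_le (⟪gk, ek⟫ : ℝ)
      nlinarith [hie, htpos.le]
    have hterm1 : t * (a k * (t * (P + Q * a k))) ≤ (P + Q) * t ^ 2 * (1 + a k ^ 2) := by
      nlinarith [mul_nonneg (mul_nonneg (sq_nonneg t) hP) (sq_nonneg (a k - 1)),
        mul_nonneg (sq_nonneg t) hQ, mul_nonneg (sq_nonneg t) hP]
    have hterm2 : β / 2 * ‖-(t • (gk + ek))‖ ^ 2
        ≤ β * ((1 + M * Q) ^ 2 + M ^ 2 * P ^ 2) * t ^ 2 * (1 + a k ^ 2) := by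
      have h1 : β / 2 * ‖-(t • (gk + ek))‖ ^ 2
          ≤ β / 2 * (t ^ 2 * ((2 * (1 + M * Q) ^ 2 + 2 * M ^ 2 * P ^ 2) * (1 + a k ^ 2))) := by
        apply mul_le_mul_of_nonneg_left _ (by positivity)
        calc ‖-(t • (gk + ek))‖ ^ 2 ≤ t ^ 2 * (a k + M * (P + Q * a k)) ^ 2 := hnv2
          _ ≤ _ := by
              apply mul_le_mul_of_nonneg_left hsq (by positivity)
      nlinarith [h1]
    have hC1 : (P + Q) * t ^ 2 * (1 + a k ^ 2)
        + β * ((1 + M * Q) ^ 2 + M ^ 2 * P ^ 2) * t ^ 2 * (1 + a k ^ 2)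
        ≤ C * t ^ 2 * (1 + a k ^ 2) := by
      rw [hC_def]
      nlinarith [sq_nonneg t, sq_nonneg (a k), mul_nonneg (sq_nonneg t) (sq_nonneg (a k))]
    linarith [hd, habs, hterm1, hterm2, hC1]
  -- summability of weighted squares
  obtain ⟨B₀, hB₀⟩ := hbdd
  have hB₀' : ∀ x, B₀ ≤ f x := fun x => hB₀ (Set.mem_range_self x)
  set T : ℝ := ∑' k, η k ^ 2 with hT_def
  have hTnn : 0 ≤ T := tsum_nonneg fun k => sq_nonneg _
  obtain ⟨N, hN⟩ := (Metric.tendsto_atTop.1 hη0) (1 / (2 * C)) (by positivity)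
  have hNs : ∀ k, N ≤ k → η k ≤ 1 / (2 * C) := by
    intro k hk
    have := hN k hk
    rw [Real.dist_eq, sub_zero, abs_of_pos (hηpos k)] at this
    linarith
  have hw_step : ∀ k, N ≤ k →
      η k * a k ^ 2 ≤ 2 * (f (y k) - f (y (k + 1))) + 2 * C * η k ^ 2 := by
    intro k hk
    have h1 := key k
    have h2 : C * η k ^ 2 * (1 + a k ^ 2) = C * η k ^ 2 + (C * η k) * (η k * a k ^ 2) := by
      ring
    have h3 : C * η k ≤ 1 / 2 := by
      have := hNs k hk
      rw [le_div_iff₀ (by positivity)] at this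
      nlinarith
    have h4 : 0 ≤ η k * a k ^ 2 := mul_nonneg (hηpos k).le (sq_nonneg _)
    nlinarith [h1, mul_le_mul_of_nonneg_right h3 h4]
  have hsum : Summable (fun k => η k * a k ^ 2) := by
    apply summable_of_sum_range_le
      (c := ∑ k ∈ Finset.range N, η k * a k ^ 2 + (2 * (f (y N) - B₀) + 2 * C * T))
    · intro k; exact mul_nonneg (hηpos k).le (sq_nonneg _)
    · intro n
      rcases le_or_gt n N with h | h
      · have h1 : ∑ k ∈ Finset.range n, η k * a k ^ 2
            ≤ ∑ k ∈ Finset.range N, η k * a k ^ 2 := by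
          apply Finset.sum_le_sum_of_subset_of_nonneg (Finset.range_subset_range.2 h)
          intro i _ _; exact mul_nonneg (hηpos i).le (sq_nonneg _)
        have h2 : B₀ ≤ f (y N) := hB₀' _
        nlinarith [hTnn, hCpos]
      · rw [← Finset.sum_range_add_sum_Ico _ h.le]
        have h1 : ∑ k ∈ Finset.Ico N n, η k * a k ^ 2
            ≤ 2 * (f (y N) - f (y n)) + 2 * C * ∑ k ∈ Finset.Ico N n, η k ^ 2 := by
          have htel : ∑ k ∈ Finset.Ico N n, (f (y k) - f (y (k + 1)))
              = f (y N) - f (y n) := by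
            rw [Finset.sum_Ico_eq_sub _ h.le]
            have hr : ∀ q, ∑ k ∈ Finset.range q, (f (y k) - f (y (k + 1)))
                = f (y 0) - f (y q) := by
              intro q
              have := Finset.sum_range_sub (fun k => f (y k)) q
              have h2 : ∑ k ∈ Finset.range q, (f (y k) - f (y (k + 1)))
                  = -∑ k ∈ Finset.range q, (f (y (k + 1)) - f (y k)) := by
                rw [← Finset.sum_neg_distrib]
                apply Finset.sum_congr rfl
                intros; ring
              rw [h2, this]; ring
            rw [hr, hr]; ring
          calc ∑ k ∈ Finset.Ico N n, η k * a k ^ 2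
              ≤ ∑ k ∈ Finset.Ico N n, (2 * (f (y k) - f (y (k + 1))) + 2 * C * η k ^ 2) := by
                apply Finset.sum_le_sum
                intro i hi
                rw [Finset.mem_Ico] at hi
                exact hw_step i hi.1
            _ = 2 * (f (y N) - f (y n)) + 2 * C * ∑ k ∈ Finset.Ico N n, η k ^ 2 := by
                rw [Finset.sum_add_distrib, ← Finset.mul_sum, ← Finset.mul_sum, htel]
        have h2 : ∑ k ∈ Finset.Ico N n, η k ^ 2 ≤ T := by
          calc ∑ k ∈ Finset.Ico N n, η k ^ 2 ≤ ∑ k ∈ Finset.range n, η k ^ 2 := by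
                apply Finset.sum_le_sum_of_subset_of_nonneg
                · intro i hi; rw [Finset.mem_Ico] at hi; exact Finset.mem_range.2 hi.2
                · intro i _ _; exact sq_nonneg _
            _ ≤ T := Summable.sum_le_tsum _ (fun i _ => sq_nonneg _) hηsq
        have h3 : B₀ ≤ f (y n) := hB₀' _
        nlinarith [hCpos]
  -- conclude
  have hmain : Tendsto a atTop (nhds 0) :=
    core_seq η a c hcpos hηpos hηdiv hη0 ha hsum hinc
  have hgrad : Tendsto (fun k => gradient f (y k)) atTop (nhds 0) := by
    rw [tendsto_zero_iff_norm_tendsto_zero]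
    exact hmain
  exact ⟨hmain.liminf_eq, hgrad⟩

end auxsec
end
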